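/- Let n ≥ p ≥ 1, let X be a real n×p matrix with XᵀX = I_p, let S = (Xᵀ⊗X)·Π, and set a = p(p−1)/2, c = (n−p)p, d = p(p+1)/2. Then there exists an orthogonal np×np real matrix Q such that simultaneously Qᵀ·(2I_{np} + (1/2)S − (1/2)S²)·Q = diag(I_a, 2I_{np−a}) and Qᵀ·(−2I_{np} + (1/2)S + (3/2)S²)·Q = diag(−I_a, −2I_c, O_d). -/

import Mathlib

open Matrix
open scoped Kronecker

/-- The commutation (vec-permutation) matrix `Π` with rows indexed by `Fin a × Fin b`
and columns by `Fin b × Fin a`; entry `((j,i),(i',j'))` is `1` iff `i = i'` and `j = j'`. -/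
def commMat (a b : ℕ) : Matrix (Fin a × Fin b) (Fin b × Fin a) ℝ :=
  fun r c => if r.1 = c.2 ∧ r.2 = c.1 then 1 else 0

/-- `S(X) = (Xᵀ ⊗ₖ X) Π`. -/
noncomputable def Smat (n p : ℕ) (X : Matrix (Fin n) (Fin p) ℝ) :
    Matrix (Fin p × Fin n) (Fin p × Fin n) ℝ :=
  (Xᵀ ⊗ₖ X) * commMat n p

variable {n p : ℕ} {X : Matrix (Fin n) (Fin p) ℝ}

lemma smat_apply (i k : Fin p) (j l : Fin n) :
    Smat n p X (i, j) (k, l) = X l i * X j k := by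
  rw [Smat, mul_apply]
  have : ∀ x : Fin n × Fin p,
      (Xᵀ ⊗ₖ X) (i, j) x * commMat n p x (k, l)
        = if x = (l, k) then (Xᵀ ⊗ₖ X) (i, j) x else 0 := by
    intro x
    simp only [commMat, mul_ite, mul_one, mul_zero]
    congr 1
    simp [Prod.ext_iff, and_comm]
  rw [Finset.sum_congr rfl fun x _ => this x, Finset.sum_ite_eq' Finset.univ (l, k)]
  simp [kroneckerMap_apply]

lemma smat_isHermitian : (Smat n p X).IsHermitian := by
  ext ⟨k, l⟩ ⟨i, j⟩
  simp only [conjTranspose_apply, smat_apply, star_trivial]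
  ring

lemma smat_sq (hX : Xᵀ * X = 1) (i k : Fin p) (j l : Fin n) :
    (Smat n p X * Smat n p X) (i, j) (k, l)
      = (if i = k then 1 else 0) * (X * Xᵀ) j l := by
  rw [mul_apply, Fintype.sum_prod_type]
  simp only [smat_apply]
  rw [show (∑ a : Fin p, ∑ b : Fin n, X b i * X j a * (X l a * X b k))
      = (∑ a : Fin p, X j a * X l a) * (∑ b : Fin n, X b i * X b k) by
    rw [Finset.sum_mul_sum]; apply Finset.sum_congr rfl; intro a _
    apply Finset.sum_congr rfl; intro b _; ring]
  have h1 : (∑ b : Fin n, X b i * X b k) = if i = k then 1 else 0 := by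
    have := congrFun (congrFun hX i) k
    simpa [mul_apply, one_apply] using this
  rw [h1, mul_apply]
  simp only [transpose_apply]
  ring

lemma smat_cube (hX : Xᵀ * X = 1) :
    Smat n p X * Smat n p X * Smat n p X = Smat n p X := by
  have hXXX : X * Xᵀ * X = X := by
    rw [Matrix.mul_assoc, hX, Matrix.mul_one]
  ext ⟨i, j⟩ ⟨k, l⟩
  rw [mul_apply, Fintype.sum_prod_type]
  simp only [smat_sq hX, smat_apply]
  rw [show (∑ x : Fin p, ∑ x1 : Fin n, (if i = x then 1 else 0) * (X * Xᵀ) j x1 * (X l x * X x1 k))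
      = ∑ x1 : Fin n, (X * Xᵀ) j x1 * (X l i * X x1 k) by
    rw [Finset.sum_comm]
    apply Finset.sum_congr rfl; intro x1 _
    rw [Finset.sum_congr rfl (fun x _ => by
      rw [ite_mul, one_mul, zero_mul, ite_mul, zero_mul]), Finset.sum_ite_eq Finset.univ i]
    simp]
  have h2 : (∑ x1 : Fin n, (X * Xᵀ) j x1 * X x1 k) = X j k := by
    have := congrFun (congrFun hXXX j) k
    rw [← this, mul_apply]
  calc ∑ x1 : Fin n, (X * Xᵀ) j x1 * (X l i * X x1 k)
      = (∑ x1 : Fin n, (X * Xᵀ) j x1 * X x1 k) * X l i := by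
        rw [Finset.sum_mul]; apply Finset.sum_congr rfl; intro b _; ring
    _ = X l i * X j k := by rw [h2]; ring

lemma trace_smat (hX : Xᵀ * X = 1) : (Smat n p X).trace = p := by
  rw [trace]
  rw [Fintype.sum_prod_type]
  simp only [diag_apply, smat_apply]
  have : ∀ i : Fin p, (∑ j : Fin n, X j i * X j i) = 1 := by
    intro i
    have := congrFun (congrFun hX i) i
    simpa [mul_apply, one_apply] using this
  simp [this]

lemma trace_smat_sq (hX : Xᵀ * X = 1) :
    (Smat n p X * Smat n p X).trace = (p : ℝ) * p := by
  rw [trace, Fintype.sum_prod_type]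
  simp only [diag_apply, smat_sq hX, if_pos rfl, one_mul]
  have : (∑ j : Fin n, (X * Xᵀ) j j) = (p : ℝ) := by
    have h : (X * Xᵀ).trace = (Xᵀ * X).trace := trace_mul_comm X Xᵀ
    rw [hX] at h
    simpa [trace, trace_one] using h
  simp [this]

lemma sandwich {ι : Type*} [Fintype ι] [DecidableEq ι] (V A B : Matrix ι ι ℝ)
    (hV : V * Vᵀ = 1) :
    Vᵀ * (A * B) * V = (Vᵀ * A * V) * (Vᵀ * B * V) := by
  have h1 : Vᵀ * A * (V * Vᵀ) * B * V = Vᵀ * (A * B) * V := by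
    rw [hV, mul_one]; simp only [Matrix.mul_assoc]
  rw [← h1]; simp only [Matrix.mul_assoc]

lemma exists_matching_equiv {α β : Type*} [Fintype α] [Fintype β]
    (f : α → Fin 3) (g : β → Fin 3)
    (h : ∀ v, Fintype.card {y // g y = v} = Fintype.card {x // f x = v}) :
    ∃ e : β ≃ α, ∀ y, f (e y) = g y := by
  classical
  refine ⟨(Equiv.sigmaFiberEquiv g).symm.trans
    ((Equiv.sigmaCongrRight fun v => (Fintype.equivOfCardEq (h v))).trans
      (Equiv.sigmaFiberEquiv f)), fun y => ?_⟩
  simp only [Equiv.trans_apply, Equiv.sigmaFiberEquiv, Equiv.sigmaCongrRight,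
    Equiv.coe_fn_symm_mk, Equiv.coe_fn_mk]
  exact ((Fintype.equivOfCardEq (h (g y))) ⟨y, rfl⟩).2

lemma card_fin_lt (N a : ℕ) (ha : a ≤ N) :
    Fintype.card {i : Fin N // (i : ℕ) < a} = a := by
  have e : {i : Fin N // (i : ℕ) < a} ≃ Fin a :=
    ⟨fun x => ⟨x.1, x.2⟩, fun i => ⟨⟨i, lt_of_lt_of_le i.2 ha⟩, i.2⟩,
      fun x => rfl, fun i => rfl⟩
  exact (Fintype.card_congr e).trans (Fintype.card_fin _)

lemma card_fin_between (N a b : ℕ) (hab : a + b ≤ N) :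
    Fintype.card {i : Fin N // a ≤ (i : ℕ) ∧ (i : ℕ) < a + b} = b := by
  have e : {i : Fin N // a ≤ (i : ℕ) ∧ (i : ℕ) < a + b} ≃ Fin b :=
    ⟨fun x => ⟨x.1 - a, by obtain ⟨x, h1, h2⟩ := x; simp only; omega⟩,
     fun i => ⟨⟨a + i, by obtain ⟨i, hi⟩ := i; simp only; omega⟩,
       by obtain ⟨i, hi⟩ := i; constructor <;> simp <;> omega⟩,
     fun x => by obtain ⟨⟨x, hx⟩, h1, h2⟩ := x; ext; simp at h1 h2 ⊢; omega,
     fun i => by obtain ⟨i, hi⟩ := i; ext; simp⟩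
  exact (Fintype.card_congr e).trans (Fintype.card_fin _)

lemma card_fin_ge (N a : ℕ) (ha : a ≤ N) :
    Fintype.card {i : Fin N // a ≤ (i : ℕ)} = N - a := by
  have e : {i : Fin N // a ≤ (i : ℕ)} ≃ Fin (N - a) :=
    ⟨fun x => ⟨x.1 - a, by obtain ⟨⟨x, hx⟩, h1⟩ := x; simp only; omega⟩,
     fun i => ⟨⟨a + i, by obtain ⟨i, hi⟩ := i; simp only; omega⟩,
       by obtain ⟨i, hi⟩ := i; simp⟩,
     fun x => by obtain ⟨⟨x, hx⟩, h1⟩ := x; ext; simp at h1 ⊢; omega,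
     fun i => by obtain ⟨i, hi⟩ := i; ext; simp⟩
  exact (Fintype.card_congr e).trans (Fintype.card_fin _)

/-- There is a single orthogonal matrix `Q` simultaneously bringing
`D_ii = 2I + (1/2)S − (1/2)S²` to `diag(I_a, 2I_{np−a})` and
`L_ii = −2I + (1/2)S + (3/2)S²` to `diag(−I_a, −2I_c, O_d)`, where `a = p(p−1)/2`,
`c = (n−p)p`, `d = p(p+1)/2`. -/
theorem stmt8 (n p : ℕ) (hp : 1 ≤ p) (hnp : p ≤ n)
    (X : Matrix (Fin n) (Fin p) ℝ) (hX : Xᵀ * X = 1) :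
    ∃ Q : Matrix (Fin p × Fin n) (Fin (n * p)) ℝ, Qᵀ * Q = 1 ∧ Q * Qᵀ = 1 ∧
      Qᵀ * ((2 : ℝ) • (1 : Matrix (Fin p × Fin n) (Fin p × Fin n) ℝ)
            + (1 / 2 : ℝ) • Smat n p X - (1 / 2 : ℝ) • (Smat n p X * Smat n p X)) * Q
        = Matrix.diagonal (fun i : Fin (n * p) =>
            if (i : ℕ) < p * (p - 1) / 2 then (1 : ℝ) else 2) ∧
      Qᵀ * ((-2 : ℝ) • (1 : Matrix (Fin p × Fin n) (Fin p × Fin n) ℝ)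
            + (1 / 2 : ℝ) • Smat n p X + (3 / 2 : ℝ) • (Smat n p X * Smat n p X)) * Q
        = Matrix.diagonal (fun i : Fin (n * p) =>
            if (i : ℕ) < p * (p - 1) / 2 then (-1 : ℝ)
            else if (i : ℕ) < p * (p - 1) / 2 + (n - p) * p then -2 else 0) := by
  classical
  set S := Smat n p X with hSdef
  have hH : S.IsHermitian := smat_isHermitian
  set V : Matrix (Fin p × Fin n) (Fin p × Fin n) ℝ := (hH.eigenvectorUnitary : Matrix (Fin p × Fin n) (Fin p × Fin n) ℝ) with hVdef
  set lam : (Fin p × Fin n) → ℝ := hH.eigenvalues with hlamdef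
  have hstar : star V = Vᵀ := by
    rw [Matrix.star_eq_conjTranspose, conjTranspose_eq_transpose_of_trivial]
  have hVV : Vᵀ * V = 1 := by
    rw [← hstar]
    exact mem_unitaryGroup_iff'.mp hH.eigenvectorUnitary.2
  have hVV' : V * Vᵀ = 1 := by
    rw [← hstar]
    exact mem_unitaryGroup_iff.mp hH.eigenvectorUnitary.2
  have hdiag : Vᵀ * S * V = diagonal lam := by
    have := hH.conjStarAlgAut_star_eigenvectorUnitary; rw [Unitary.conjStarAlgAut_star_apply] at this
    rw [hstar] at this
    rw [this, RCLike.ofReal_real_eq_id, Function.id_comp]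
  have hdiag2 : Vᵀ * (S * S) * V = diagonal (fun x => lam x * lam x) := by
    rw [sandwich _ _ _ hVV', hdiag, diagonal_mul_diagonal]
  have hlam3 : ∀ x, lam x * lam x * lam x = lam x := by
    intro x
    have h3 : Vᵀ * (S * S * S) * V = diagonal (fun x => lam x * lam x * lam x) := by
      rw [sandwich _ _ _ hVV', hdiag2, hdiag, diagonal_mul_diagonal]
    rw [smat_cube hX, hdiag] at h3
    have := congrFun (congrFun h3 x) x
    simpa [diagonal_apply_eq] using this.symm
  have htri : ∀ x, lam x = -1 ∨ lam x = 0 ∨ lam x = 1 := by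
    intro x
    have h0 : lam x * ((lam x - 1) * (lam x + 1)) = 0 := by
      have := hlam3 x; nlinarith [this]
    rcases mul_eq_zero.mp h0 with h | h
    · exact Or.inr (Or.inl h)
    · rcases mul_eq_zero.mp h with h | h
      · exact Or.inr (Or.inr (by linarith))
      · exact Or.inl (by linarith)
  have hsum1 : ∑ x, lam x = (p : ℝ) := by
    have h1 : (diagonal lam).trace = S.trace := by
      rw [← hdiag, trace_mul_cycle, hVV', one_mul]
    rw [trace_diagonal] at h1
    rw [h1, trace_smat hX]
  have hsum2 : ∑ x, lam x * lam x = (p : ℝ) * p := by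
    have h1 : (diagonal (fun x => lam x * lam x)).trace = (S * S).trace := by
      rw [← hdiag2, trace_mul_cycle, hVV', one_mul]
    rw [trace_diagonal] at h1
    rw [h1, trace_smat_sq hX]
  -- counting
  set A : Finset (Fin p × Fin n) := Finset.univ.filter (fun x => lam x = -1) with hA
  set C : Finset (Fin p × Fin n) := Finset.univ.filter (fun x => lam x = 0) with hC
  set D : Finset (Fin p × Fin n) := Finset.univ.filter (fun x => lam x = 1) with hD
  have hsplit : ∀ f : (Fin p × Fin n) → ℝ, ∑ x, f x = ∑ x ∈ A, f x + ∑ x ∈ C, f x + ∑ x ∈ D, f x := by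
    intro f
    rw [← Finset.sum_filter_add_sum_filter_not Finset.univ (fun x => lam x = -1) f, add_assoc]
    congr 1
    rw [← Finset.sum_filter_add_sum_filter_not (Finset.univ.filter (fun x => ¬ lam x = -1))
      (fun x => lam x = 0) f]
    congr 1
    · rw [Finset.filter_filter]
      apply Finset.sum_congr _ (fun _ _ => rfl)
      apply Finset.filter_congr
      intro x _
      constructor
      · exact fun h => h.2
      · intro h; exact ⟨by rw [h]; norm_num, h⟩
    · rw [Finset.filter_filter]
      apply Finset.sum_congr _ (fun _ _ => rfl)
      apply Finset.filter_congr
      intro x _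
      constructor
      · intro h
        rcases htri x with h1 | h1 | h1
        · exact absurd h1 h.1
        · exact absurd h1 h.2
        · exact h1
      · intro h; exact ⟨by rw [h]; norm_num, by rw [h]; norm_num⟩
  have hsA : ∑ x ∈ A, lam x = -(A.card : ℝ) := by
    rw [Finset.sum_congr rfl (fun x hx => (Finset.mem_filter.mp hx).2)]
    simp [mul_comm]; rfl
  have hsC : ∑ x ∈ C, lam x = 0 := by
    rw [Finset.sum_congr rfl (fun x hx => (Finset.mem_filter.mp hx).2)]
    simp
  have hsD : ∑ x ∈ D, lam x = (D.card : ℝ) := by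
    rw [Finset.sum_congr rfl (fun x hx => (Finset.mem_filter.mp hx).2)]
    simp [mul_comm]; rfl
  have hsA2 : ∑ x ∈ A, lam x * lam x = (A.card : ℝ) := by
    rw [Finset.sum_congr rfl (fun x hx => by rw [(Finset.mem_filter.mp hx).2])]
    simp
  have hsC2 : ∑ x ∈ C, lam x * lam x = 0 := by
    rw [Finset.sum_congr rfl (fun x hx => by rw [(Finset.mem_filter.mp hx).2])]
    simp
  have hsD2 : ∑ x ∈ D, lam x * lam x = (D.card : ℝ) := by
    rw [Finset.sum_congr rfl (fun x hx => by rw [(Finset.mem_filter.mp hx).2])]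
    simp
  have e1 : (D.card : ℝ) - A.card = p := by
    have := hsum1; rw [hsplit lam, hsA, hsC, hsD] at this; linarith
  have e2 : (D.card : ℝ) + A.card = (p : ℝ) * p := by
    have := hsum2
    rw [hsplit (fun x => lam x * lam x), hsA2, hsC2, hsD2] at this; linarith
  have ecard : A.card + C.card + D.card = n * p := by
    have h1 : ∑ x : (Fin p × Fin n), (1 : ℝ) = (A.card : ℝ) + C.card + D.card := by
      rw [hsplit (fun _ => (1 : ℝ))]; simp
    have h2 : ∑ x : (Fin p × Fin n), (1 : ℝ) = ((n * p : ℕ) : ℝ) := by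
      rw [Finset.sum_const, Finset.card_univ, nsmul_eq_mul, mul_one]
      norm_cast
      rw [Fintype.card_prod, Fintype.card_fin, Fintype.card_fin, Nat.mul_comm]
    rw [h2] at h1
    have := h1.symm
    push_cast at this
    exact_mod_cast this
  -- natural number arithmetic
  obtain ⟨q, hq⟩ : ∃ q, p * p = q := ⟨_, rfl⟩
  obtain ⟨N, hN⟩ : ∃ N, n * p = N := ⟨_, rfl⟩
  have hpq : p ≤ q := by
    rw [← hq]; calc p = p * 1 := (mul_one p).symm
      _ ≤ p * p := Nat.mul_le_mul_left p hp
  have hqN : q ≤ N := by rw [← hq, ← hN]; exact Nat.mul_le_mul_right p hnp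
  have hDA : D.card = A.card + p := by
    have h : (D.card : ℝ) = (A.card : ℝ) + p := by linarith [e1]
    exact_mod_cast h
  have h2A : 2 * A.card + p = q := by
    have hre : ((2 * A.card + p : ℕ) : ℝ) = ((q : ℕ) : ℝ) := by
      rw [← hq]; push_cast; linarith [e1, e2]
    exact_mod_cast hre
  rw [hN] at ecard
  have hppq : p * (p - 1) = q - p := by
    rcases Nat.exists_eq_add_of_le hp with ⟨k, hk⟩
    subst hk
    rw [← hq]
    have h : (1 + k) * (1 + k) = (1 + k) * ((1 + k) - 1) + (1 + k) := by
      have h2 : (1 + k) - 1 = k := by omega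
      rw [h2]; ring
    omega
  have hAcard : A.card = p * (p - 1) / 2 := by
    have h1 : p * (p - 1) = 2 * A.card := by omega
    rw [h1, Nat.mul_div_cancel_left _ (by norm_num)]
  have hDcard : D.card = p * (p + 1) / 2 := by
    have h1 : p * (p + 1) = 2 * D.card := by
      have h2 : p * (p + 1) = p * p + p := by ring
      rw [h2, hq]; omega
    rw [h1, Nat.mul_div_cancel_left _ (by norm_num)]
  have hCcard : C.card = (n - p) * p := by
    have h1 : (n - p) * p = N - q := by
      rw [← hq, ← hN, Nat.sub_mul]
    omega
  have haN : p * (p - 1) / 2 ≤ N := by omega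
  have hacN : p * (p - 1) / 2 + (n - p) * p ≤ N := by omega
  -- fiber index functions
  set fidx : (Fin p × Fin n) → Fin 3 :=
    fun x => if lam x = -1 then 0 else if lam x = 0 then 1 else 2 with hfidx
  set gidx : Fin (n * p) → Fin 3 :=
    fun y => if (y : ℕ) < p * (p - 1) / 2 then 0
      else if (y : ℕ) < p * (p - 1) / 2 + (n - p) * p then 1 else 2 with hgidx
  have hcard_gf : ∀ v, Fintype.card {y // gidx y = v} = Fintype.card {x // fidx x = v} := by
    intro v
    fin_cases v
    · show Fintype.card {y // gidx y = 0} = Fintype.card {x // fidx x = 0}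
      have h1 : Fintype.card {y : Fin (n * p) // gidx y = 0}
          = Fintype.card {y : Fin (n * p) // (y : ℕ) < p * (p - 1) / 2} := by
        apply Fintype.card_congr
        apply Equiv.subtypeEquivRight
        intro y
        simp only [hgidx]
        split_ifs with k1 k2
        · exact iff_of_true rfl k1
        · exact iff_of_false (by decide) k1
        · exact iff_of_false (by decide) k1
      have h2 : Fintype.card {x : Fin p × Fin n // fidx x = 0}
          = Fintype.card {x : Fin p × Fin n // lam x = -1} := by
        apply Fintype.card_congr
        apply Equiv.subtypeEquivRight
        intro x
        simp only [hfidx]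
        split_ifs with k1 k2
        · exact iff_of_true rfl k1
        · exact iff_of_false (by decide) k1
        · exact iff_of_false (by decide) k1
      rw [h1, h2, card_fin_lt _ _ (by rw [hN]; exact haN), Fintype.card_subtype, ← hA, hAcard]
    · show Fintype.card {y // gidx y = 1} = Fintype.card {x // fidx x = 1}
      have h1 : Fintype.card {y : Fin (n * p) // gidx y = 1}
          = Fintype.card {y : Fin (n * p) // p * (p - 1) / 2 ≤ (y : ℕ)
              ∧ (y : ℕ) < p * (p - 1) / 2 + (n - p) * p} := by
        apply Fintype.card_congr
        apply Equiv.subtypeEquivRight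
        intro y
        simp only [hgidx]
        split_ifs with k1 k2
        · exact iff_of_false (by decide) (fun h => absurd h.1 (by omega))
        · exact iff_of_true rfl ⟨by omega, k2⟩
        · exact iff_of_false (by decide) (fun h => absurd h.2 k2)
      have h2 : Fintype.card {x : Fin p × Fin n // fidx x = 1}
          = Fintype.card {x : Fin p × Fin n // lam x = 0} := by
        apply Fintype.card_congr
        apply Equiv.subtypeEquivRight
        intro x
        simp only [hfidx]
        split_ifs with k1 k2
        · exact iff_of_false (by decide) (fun h => by rw [h] at k1; norm_num at k1)
        · exact iff_of_true rfl k2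
        · exact iff_of_false (by decide) k2
      rw [h1, h2, card_fin_between _ _ _ (by rw [hN]; exact hacN),
        Fintype.card_subtype, ← hC, hCcard]
    · show Fintype.card {y // gidx y = 2} = Fintype.card {x // fidx x = 2}
      have h1 : Fintype.card {y : Fin (n * p) // gidx y = 2}
          = Fintype.card {y : Fin (n * p) // p * (p - 1) / 2 + (n - p) * p ≤ (y : ℕ)} := by
        apply Fintype.card_congr
        apply Equiv.subtypeEquivRight
        intro y
        simp only [hgidx]
        split_ifs with k1 k2
        · exact iff_of_false (by decide) (by omega)
        · exact iff_of_false (by decide) (by omega)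
        · exact iff_of_true rfl (by omega)
      have h2 : Fintype.card {x : Fin p × Fin n // fidx x = 2}
          = Fintype.card {x : Fin p × Fin n // lam x = 1} := by
        apply Fintype.card_congr
        apply Equiv.subtypeEquivRight
        intro x
        simp only [hfidx]
        split_ifs with k1 k2
        · exact iff_of_false (by decide) (fun h => by rw [h] at k1; norm_num at k1)
        · exact iff_of_false (by decide) (fun h => by rw [h] at k2; norm_num at k2)
        · refine iff_of_true rfl ?_
          rcases htri x with h | h | h
          · exact absurd h k1
          · exact absurd h k2
          · exact h
      rw [h1, h2, card_fin_ge _ _ (by rw [hN]; exact hacN),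
        Fintype.card_subtype, ← hD, hN, hDcard]
      omega
  obtain ⟨e, he⟩ := exists_matching_equiv fidx gidx hcard_gf
  have hlamE : ∀ y : Fin (n * p), lam (e y)
      = (if (y : ℕ) < p * (p - 1) / 2 then -1
          else if (y : ℕ) < p * (p - 1) / 2 + (n - p) * p then 0 else 1) := by
    intro y
    have h := he y
    split_ifs with k1 k2
    · have hg : gidx y = 0 := by simp only [hgidx, if_pos k1]
      rw [hg] at h
      by_contra hne
      rw [hfidx] at h
      simp only [if_neg hne] at h
      split_ifs at h <;> exact absurd h (by decide)
    · have hg : gidx y = 1 := by simp only [hgidx, if_neg k1, if_pos k2]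
      rw [hg, hfidx] at h
      simp only at h
      split_ifs at h with m1 m2
      · exact absurd h (by decide)
      · exact m2
      · exact absurd h (by decide)
    · have hg : gidx y = 2 := by simp only [hgidx, if_neg k1, if_neg k2]
      rw [hg, hfidx] at h
      simp only at h
      split_ifs at h with m1 m2
      · exact absurd h (by decide)
      · exact absurd h (by decide)
      · rcases htri (e y) with h' | h' | h'
        · exact absurd h' m1
        · exact absurd h' m2
        · exact h'
  -- the matrix Q
  set Q : Matrix (Fin p × Fin n) (Fin (n * p)) ℝ := V.submatrix id ⇑e with hQdef
  have hQt : Qᵀ = Vᵀ.submatrix ⇑e id := transpose_submatrix _ _ _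
  have key : ∀ M : Matrix (Fin p × Fin n) (Fin p × Fin n) ℝ,
      Qᵀ * M * Q = (Vᵀ * M * V).submatrix ⇑e ⇑e := by
    intro M
    have h1 : (Vᵀ * M).submatrix ⇑e id = Vᵀ.submatrix ⇑e id * M := by
      rw [submatrix_mul Vᵀ M ⇑e id id Function.bijective_id, submatrix_id_id]
    have h2 : (Vᵀ * M * V).submatrix ⇑e ⇑e
        = (Vᵀ * M).submatrix ⇑e id * V.submatrix id ⇑e :=
      submatrix_mul _ V ⇑e id ⇑e Function.bijective_id
    rw [h2, h1, hQt, hQdef]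
  have hQQ : Qᵀ * Q = 1 := by
    have h2 : (Vᵀ * V).submatrix ⇑e ⇑e = Vᵀ.submatrix ⇑e id * V.submatrix id ⇑e :=
      submatrix_mul Vᵀ V ⇑e id ⇑e Function.bijective_id
    rw [hQt, hQdef, ← h2, hVV, submatrix_one_equiv]
  have hQQ' : Q * Qᵀ = 1 := by
    have h2 : (V * Vᵀ).submatrix id id = V.submatrix id ⇑e * Vᵀ.submatrix ⇑e id :=
      submatrix_mul V Vᵀ id ⇑e id e.bijective
    rw [hQt, hQdef, ← h2, hVV', submatrix_id_id]
  have main : ∀ α β γ : ℝ,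
      Vᵀ * (α • (1 : Matrix (Fin p × Fin n) (Fin p × Fin n) ℝ) + β • S + γ • (S * S)) * V
        = diagonal (fun x => α + β * lam x + γ * (lam x * lam x)) := by
    intro α β γ
    have h1 : Vᵀ * ((1 : Matrix (Fin p × Fin n) (Fin p × Fin n) ℝ)) * V = 1 := by
      rw [Matrix.mul_one, hVV]
    have hexp : Vᵀ * (α • (1 : Matrix (Fin p × Fin n) (Fin p × Fin n) ℝ)
          + β • S + γ • (S * S)) * V
        = α • (Vᵀ * 1 * V) + β • (Vᵀ * S * V) + γ • (Vᵀ * (S * S) * V) := by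
      simp only [Matrix.mul_add, Matrix.add_mul, Matrix.mul_smul, Matrix.smul_mul]
    rw [hexp, h1, hdiag, hdiag2]
    ext i j
    by_cases hij : i = j
    · subst hij
      simp [diagonal_apply_eq, Matrix.one_apply_eq]
    · simp [diagonal_apply_ne _ hij, Matrix.one_apply_ne hij]
  refine ⟨Q, hQQ, hQQ', ?_, ?_⟩
  · have hform : (2 : ℝ) • (1 : Matrix (Fin p × Fin n) (Fin p × Fin n) ℝ)
        + (1 / 2 : ℝ) • S - (1 / 2 : ℝ) • (S * S)
        = (2 : ℝ) • (1 : Matrix (Fin p × Fin n) (Fin p × Fin n) ℝ)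
          + (1 / 2 : ℝ) • S + (-(1 / 2) : ℝ) • (S * S) := by
      rw [sub_eq_add_neg, neg_smul]
    rw [hform, key, main 2 (1/2) (-(1/2)), submatrix_diagonal_equiv]
    refine congrArg Matrix.diagonal (funext fun y => ?_)
    rw [Function.comp_apply, hlamE y]
    split_ifs <;> norm_num
  · have hform : (-2 : ℝ) • (1 : Matrix (Fin p × Fin n) (Fin p × Fin n) ℝ)
        + (1 / 2 : ℝ) • S + (3 / 2 : ℝ) • (S * S)
        = (-2 : ℝ) • (1 : Matrix (Fin p × Fin n) (Fin p × Fin n) ℝ)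
          + (1 / 2 : ℝ) • S + (3 / 2 : ℝ) • (S * S) := rfl
    rw [key, main (-2) (1/2) (3/2), submatrix_diagonal_equiv]
    refine congrArg Matrix.diagonal (funext fun y => ?_)
    rw [Function.comp_apply, hlamE y]
    split_ifs <;> norm_num
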